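/- arXiv:1805.02322 — 3 statements merged into one kernel-verified Lean document; each statement's English description precedes it below -/
import Mathlib

section
/- If h > g > 0, then the function p ↦ log₂(1 + h p) − log₂(1 + g p) is strictly increasing and concave on p ≥ 0. -/
/-- If `h > g > 0`, then `p ↦ log₂(1+hp) − log₂(1+gp)` is strictly increasing and
concave on `p ≥ 0`. -/
theorem stmt_3 (h g : ℝ) (hg : 0 < g) (hhg : g < h) :
    StrictMonoOn (fun p : ℝ => Real.logb 2 (1 + h * p) - Real.logb 2 (1 + g * p))
      (Set.Ici 0) ∧
    ConcaveOn ℝ (Set.Ici 0)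
      (fun p : ℝ => Real.logb 2 (1 + h * p) - Real.logb 2 (1 + g * p)) := by
  have hh : 0 < h := hg.trans hhg
  have hlog2 : 0 < Real.log 2 := Real.log_pos one_lt_two
  set f := fun p : ℝ => Real.logb 2 (1 + h * p) - Real.logb 2 (1 + g * p) with hf
  have hfun : f = fun p => (Real.log (1 + h * p) - Real.log (1 + g * p)) / Real.log 2 := by
    funext p; simp [hf, Real.logb, sub_div]
  have key : ∀ x : ℝ, 0 ≤ x →
      HasDerivAt f ((h - g) / ((1 + h * x) * (1 + g * x) * Real.log 2)) x := by
    intro x hx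
    have hA : (0:ℝ) < 1 + h * x := by positivity
    have hB : (0:ℝ) < 1 + g * x := by positivity
    have h1 : HasDerivAt (fun p : ℝ => Real.log (1 + h * p)) (h / (1 + h * x)) x := by
      have hin : HasDerivAt (fun p : ℝ => 1 + h * p) h x := by
        simpa using ((hasDerivAt_id x).const_mul h).const_add 1
      have := (Real.hasDerivAt_log hA.ne').comp x hin
      simpa [div_eq_inv_mul, Function.comp_def] using this
    have h2 : HasDerivAt (fun p : ℝ => Real.log (1 + g * p)) (g / (1 + g * x)) x := by
      have hin : HasDerivAt (fun p : ℝ => 1 + g * p) g x := by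
        simpa using ((hasDerivAt_id x).const_mul g).const_add 1
      have := (Real.hasDerivAt_log hB.ne').comp x hin
      simpa [div_eq_inv_mul, Function.comp_def] using this
    have h3 := (h1.sub h2).div_const (Real.log 2)
    rw [hfun]
    convert h3 using 1
    case e'_4 => rfl
    case e'_5 => rfl
    case e'_8 => rfl
    rw [div_sub_div _ _ hA.ne' hB.ne', div_div]
    congr 1
    ring
  have hcont : ContinuousOn f (Set.Ici 0) := fun x hx =>
    (key x hx).continuousAt.continuousWithinAt
  have hint : interior (Set.Ici (0:ℝ)) = Set.Ioi 0 := interior_Ici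
  have hderiv : ∀ x : ℝ, 0 ≤ x →
      deriv f x = (h - g) / ((1 + h * x) * (1 + g * x) * Real.log 2) := fun x hx =>
    (key x hx).deriv
  constructor
  · apply strictMonoOn_of_deriv_pos (convex_Ici 0) hcont
    intro x hx
    rw [hint] at hx
    have hx' : (0:ℝ) < x := hx
    rw [hderiv x hx.le]
    have hA : (0:ℝ) < 1 + h * x := by positivity
    have hB : (0:ℝ) < 1 + g * x := by positivity
    have : 0 < h - g := sub_pos.mpr hhg
    positivity
  · apply AntitoneOn.concaveOn_of_deriv (convex_Ici 0) hcont
    · rw [hint]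
      intro x hx
      exact ((key x (le_of_lt hx)).differentiableAt).differentiableWithinAt
    · rw [hint]
      intro x hx y hy hxy
      have hx' : (0:ℝ) < x := hx
      have hy' : (0:ℝ) < y := hy
      rw [hderiv x (le_of_lt hx), hderiv y (le_of_lt hy)]
      have hAx : (0:ℝ) < 1 + h * x := by positivity
      have hBx : (0:ℝ) < 1 + g * x := by positivity
      have hAy : (0:ℝ) < 1 + h * y := by positivity
      have hBy : (0:ℝ) < 1 + g * y := by positivity
      have hnum : 0 ≤ h - g := le_of_lt (sub_pos.mpr hhg)
      apply div_le_div_of_nonneg_left hnum (by positivity)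
      have h1 : 1 + h * x ≤ 1 + h * y := by nlinarith
      have h2 : 1 + g * x ≤ 1 + g * y := by nlinarith
      have := mul_le_mul h1 h2 (le_of_lt hBx) (le_of_lt hAy)
      nlinarith [hlog2]
end

section
/- If h > g > 0, then ψ(p) = α T p − λ T B (log₂(1 + h p) − log₂(1 + g p)) is convex on p ≥ 0. -/
open Real Set

lemma hasDerivAt_log1p (a x : ℝ) (hx : 0 < 1 + a*x) :
    HasDerivAt (fun p => Real.log (1 + a*p)) (a/(1+a*x)) x := by
  have h1 : HasDerivAt (fun p : ℝ => 1 + a*p) a x := by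
    simpa using ((hasDerivAt_id x).const_mul a).const_add 1
  have := (Real.hasDerivAt_log hx.ne').comp x h1
  simpa [div_eq_inv_mul, Function.comp_def] using this

lemma hasDerivAt_inv1p (a x : ℝ) (hx : 0 < 1 + a*x) :
    HasDerivAt (fun p => a/(1+a*p)) (-(a^2)/(1+a*x)^2) x := by
  have h1 : HasDerivAt (fun p : ℝ => 1 + a*p) a x := by
    simpa using ((hasDerivAt_id x).const_mul a).const_add 1
  have h2 := (h1.inv hx.ne').const_mul a
  simp only [div_eq_mul_inv]
  replace h2 : HasDerivAt (fun p => a * (1+a*p)⁻¹) (a * (-a / (1 + a * x) ^ 2)) x := h2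
  convert h2 using 1
  ring

lemma core (C a b : ℝ) (hC : 0 ≤ C) (hb : 0 < b) (hab : b < a) :
    ConvexOn ℝ (Set.Ici 0) (fun p : ℝ => C * (Real.log (1+b*p) - Real.log (1+a*p))) := by
  have ha : 0 < a := hb.trans hab
  set U : Set ℝ := Ioi (-a⁻¹) with hU
  have hUopen : IsOpen U := isOpen_Ioi
  have hposa : ∀ x ∈ U, 0 < 1 + a*x := by
    intro x hx
    have h1 : -a⁻¹ < x := hx
    have h2 : a * (-a⁻¹) < a * x := mul_lt_mul_of_pos_left h1 ha
    rw [mul_neg, mul_inv_cancel₀ ha.ne'] at h2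
    linarith
  have hposb : ∀ x ∈ U, 0 < 1 + b*x := by
    intro x hx
    have h1 := hposa x hx
    rcases le_or_gt 0 x with h | h
    · nlinarith
    · nlinarith
  set φ := fun p : ℝ => C * (Real.log (1+b*p) - Real.log (1+a*p)) with hφ
  set φ' := fun p : ℝ => C * (b/(1+b*p) - a/(1+a*p)) with hφ'
  have hderiv : ∀ x ∈ U, HasDerivAt φ (φ' x) x := fun x hx =>
    (((hasDerivAt_log1p b x (hposb x hx)).sub (hasDerivAt_log1p a x (hposa x hx))).const_mul C)
  have hsub : Set.Ici (0:ℝ) ⊆ U := by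
    intro x hx
    have : (0:ℝ) < a⁻¹ := by positivity
    simp only [hU, mem_Ioi]; simp at hx; linarith
  have hderivEq : ∀ x ∈ U, deriv φ x = φ' x := fun x hx => (hderiv x hx).deriv
  have hd2 : ∀ x ∈ U, HasDerivAt φ' (C * (-(b^2)/(1+b*x)^2 - -(a^2)/(1+a*x)^2)) x := fun x hx =>
    ((hasDerivAt_inv1p b x (hposb x hx)).sub (hasDerivAt_inv1p a x (hposa x hx))).const_mul C
  have hderiv2 : ∀ x ∈ U, deriv (deriv φ) x =
      C * (-(b^2)/(1+b*x)^2 - -(a^2)/(1+a*x)^2) := by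
    intro x hx
    have hev : deriv φ =ᶠ[nhds x] φ' :=
      Filter.eventuallyEq_of_mem (hUopen.mem_nhds hx) hderivEq
    rw [hev.deriv_eq]
    exact (hd2 x hx).deriv
  apply convexOn_of_deriv2_nonneg (convex_Ici 0)
  · exact fun x hx => ((hderiv x (hsub hx)).continuousAt).continuousWithinAt
  · intro x hx
    exact ((hderiv x (hsub (interior_subset hx))).differentiableAt).differentiableWithinAt
  · intro x hx
    have hx' := hsub (interior_subset hx)
    have hev : deriv φ =ᶠ[nhds x] φ' :=
      Filter.eventuallyEq_of_mem (hUopen.mem_nhds hx') hderivEq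
    exact (((hd2 x hx').congr_of_eventuallyEq hev).differentiableAt).differentiableWithinAt
  · intro x hx
    rw [interior_Ici] at hx
    have hx0 : (0:ℝ) < x := hx
    have hxU : x ∈ U := hsub hx0.le
    have h2 := hderiv2 x hxU
    simp only [Function.iterate_succ, Function.iterate_zero, Function.comp_apply, id_eq] at *
    rw [h2]
    have hpa := hposa x hxU
    have hpb := hposb x hxU
    have key : b^2/(1+b*x)^2 ≤ a^2/(1+a*x)^2 := by
      rw [div_le_div_iff₀ (by positivity) (by positivity)]
      nlinarith [mul_nonneg (mul_nonneg (mul_pos hb ha).le hx0.le) (sub_nonneg.mpr hab.le),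
        mul_nonneg (sub_nonneg.mpr hab.le) (by linarith : (0:ℝ) ≤ a + b)]
    have heq : C * (-(b^2)/(1+b*x)^2 - -(a^2)/(1+a*x)^2)
        = C * (a^2/(1+a*x)^2 - b^2/(1+b*x)^2) := by ring
    rw [heq]
    exact mul_nonneg hC (by linarith)

/-- If `h > g > 0`, then `ψ(p) = α T p − λ T B (log₂(1+hp) − log₂(1+gp))` is convex
on `p ≥ 0`. -/
theorem stmt_4 (α T B lam h g : ℝ) (hα : 0 < α) (hT : 0 < T) (hB : 0 < B)
    (hlam : 0 ≤ lam) (hg : 0 < g) (hhg : g < h) :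
    ConvexOn ℝ (Set.Ici 0)
      (fun p : ℝ => α * T * p -
        lam * T * B * (Real.logb 2 (1 + h * p) - Real.logb 2 (1 + g * p))) := by
  have hlog2 : (0:ℝ) < Real.log 2 := Real.log_pos (by norm_num)
  have hC0 : 0 ≤ lam * T * B / Real.log 2 := by positivity
  have hcore := core (lam * T * B / Real.log 2) h g hC0 hg hhg
  have hlin : ConvexOn ℝ (Set.Ici (0:ℝ)) (fun p : ℝ => α * T * p) := by
    simpa [smul_eq_mul] using
      (convexOn_id (convex_Ici (0:ℝ))).smul (by positivity : (0:ℝ) ≤ α * T)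
  have heq : (fun p : ℝ => α * T * p -
        lam * T * B * (Real.logb 2 (1 + h * p) - Real.logb 2 (1 + g * p)))
      = (fun p : ℝ => α * T * p) + (fun p : ℝ =>
        (lam * T * B / Real.log 2) * (Real.log (1+g*p) - Real.log (1+h*p))) := by
    funext p
    simp only [Pi.add_apply, Real.logb]
    field_simp
    ring
  rw [heq]
  exact hlin.add hcore
end

section
/- If h > g > 0 and λ B (h − g) / (ln 2 · α) > 1 · (the derivative condition at 0 is negative, i.e., λ B (h−g)/(ln2 · α) > 1), then the minimizer over p ≥ 0 of ψ(p) = α T p − λ T B (log₂(1+hp) − log₂(1+gp)) is p* = (√Δ − (h+g)) / (2 h g), where Δ = (h−g)^2 + (4 λ B h g / (ln 2 · α)) (h − g); moreover p* > 0 and satisfies ψ'(p*) = 0. -/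
set_option maxHeartbeats 1000000 in
/-- If `h > g > 0` and `λ B (h−g)/(ln 2 · α) > 1`, then the minimizer over `p ≥ 0` of
`ψ(p) = α T p − λ T B (log₂(1+hp) − log₂(1+gp))` is
`p* = (√Δ − (h+g))/(2hg)` with `Δ = (h−g)² + (4 λ B h g/(ln 2 · α))(h−g)`;
moreover `p* > 0` and `ψ'(p*) = 0`. -/
theorem stmt_5 (α T B lam h g : ℝ) (hα : 0 < α) (hT : 0 < T) (hB : 0 < B)
    (hlam : 0 ≤ lam) (hg : 0 < g) (hhg : g < h)
    (hcond : 1 < lam * B * (h - g) / (Real.log 2 * α)) :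
    let Δ : ℝ := (h - g) ^ 2 + 4 * lam * B * h * g / (Real.log 2 * α) * (h - g)
    let pstar : ℝ := (Real.sqrt Δ - (h + g)) / (2 * h * g)
    let ψ : ℝ → ℝ := fun p => α * T * p -
      lam * T * B * (Real.logb 2 (1 + h * p) - Real.logb 2 (1 + g * p))
    0 < pstar ∧ IsMinOn ψ (Set.Ici 0) pstar ∧ deriv ψ pstar = 0 := by
  intro Δ pstar ψ
  have hL : 0 < Real.log 2 := Real.log_pos one_lt_two
  set L := Real.log 2 with hLdef
  set K : ℝ := lam * B * (h - g) / (L * α) with hKdef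
  have hh : 0 < h := hg.trans hhg
  have hK1 : 1 < K := hcond
  have hK : K * (L * α) = lam * B * (h - g) := by
    rw [hKdef]; exact div_mul_cancel₀ _ (mul_pos hL hα).ne'
  have hΔeq : Δ = (h - g) ^ 2 + 4 * h * g * K := by
    simp only [hKdef]
    show (h - g) ^ 2 + 4 * lam * B * h * g / (L * α) * (h - g) = _
    ring
  have hΔpos : (h + g) ^ 2 < Δ := by
    rw [hΔeq]; nlinarith [mul_pos (mul_pos hh hg) (sub_pos.mpr hK1)]
  have hΔnn : 0 ≤ Δ := le_trans (by positivity) hΔpos.le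
  set s : ℝ := Real.sqrt Δ with hsdef
  have hs2 : s ^ 2 = Δ := Real.sq_sqrt hΔnn
  have hsnn : 0 ≤ s := Real.sqrt_nonneg Δ
  have hsgt : h + g < s := by nlinarith
  have hp0 : 0 < pstar := by
    have : pstar = (s - (h + g)) / (2 * h * g) := rfl
    rw [this]
    exact div_pos (by linarith) (by positivity)
  have hfK : (1 + h * pstar) * (1 + g * pstar) = K := by
    have hps : pstar = (s - (h + g)) / (2 * h * g) := rfl
    rw [hps]
    have h2hg : (2 * h * g) ≠ 0 := by positivity
    field_simp
    nlinarith [hs2, hΔeq]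
  clear_value K
  clear hKdef
  clear_value pstar
  clear_value s
  clear_value Δ
  clear hs2 hsnn hsgt hΔpos hΔnn hΔeq
  have hps1 : 0 < 1 + h * pstar := by nlinarith
  have hps2 : 0 < 1 + g * pstar := by nlinarith
  have hfpos : 0 < (1 + h * pstar) * (1 + g * pstar) := mul_pos hps1 hps2
  -- derivative of ψ
  have hder : ∀ p : ℝ, 0 < 1 + h * p → 0 < 1 + g * p →
      HasDerivAt ψ (α * T - lam * T * B * ((h - g) / ((1 + h * p) * (1 + g * p)) / L)) p := by
    intro p hp1 hp2
    have d1 : HasDerivAt (fun q : ℝ => 1 + h * q) h p := by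
      have := ((hasDerivAt_id' p).const_mul h).const_add 1; rwa [mul_one] at this
    have d2 : HasDerivAt (fun q : ℝ => 1 + g * q) g p := by
      have := ((hasDerivAt_id' p).const_mul g).const_add 1; rwa [mul_one] at this
    have l1 : HasDerivAt (fun q : ℝ => Real.logb 2 (1 + h * q)) (h / (1 + h * p) / L) p := by
      simpa [Real.logb] using (d1.log hp1.ne').div_const L
    have l2 : HasDerivAt (fun q : ℝ => Real.logb 2 (1 + g * q)) (g / (1 + g * p) / L) p := by
      simpa [Real.logb] using (d2.log hp2.ne').div_const L
    have main : HasDerivAt ψ (α * T * 1 - lam * T * B * (h / (1 + h * p) / L - g / (1 + g * p) / L)) p :=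
      ((hasDerivAt_id p).const_mul (α * T)).sub ((l1.sub l2).const_mul (lam * T * B))
    have heq : α * T * 1 - lam * T * B * (h / (1 + h * p) / L - g / (1 + g * p) / L)
        = α * T - lam * T * B * ((h - g) / ((1 + h * p) * (1 + g * p)) / L) := by
      rw [← sub_div, div_sub_div _ _ hp1.ne' hp2.ne']
      ring
    rwa [heq] at main
  have hderiv : ∀ p : ℝ, 0 < 1 + h * p → 0 < 1 + g * p →
      deriv ψ p = α * T - lam * T * B * ((h - g) / ((1 + h * p) * (1 + g * p)) / L) := by
    intro p hp1 hp2
    exact (hder p hp1 hp2).deriv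
  have hKpos : 0 < K := lt_trans one_pos hK1
  have hd0 : deriv ψ pstar = 0 := by
    rw [hderiv pstar hps1 hps2, hfK]
    have hLne : L ≠ 0 := hL.ne'
    have : lam * T * B * ((h - g) / K / L) = α * T := by
      rw [div_div, ← mul_div_assoc, div_eq_iff (by positivity : K * L ≠ 0)]
      linear_combination (-T) * hK
    rw [this]; ring
  refine ⟨hp0, ?_, hd0⟩
  have hkey : L * α * ((1 + h * pstar) * (1 + g * pstar)) = lam * B * (h - g) := by
    rw [hfK]; linarith [hK]
  have hdiff : ∀ p : ℝ, 0 ≤ p → DifferentiableAt ℝ ψ p := by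
    intro p hp
    exact (hder p (by nlinarith) (by nlinarith)).differentiableAt
  have hanti : AntitoneOn ψ (Set.Icc 0 pstar) := by
    apply antitoneOn_of_deriv_nonpos (convex_Icc 0 pstar)
    · exact fun x hx => (hdiff x hx.1).continuousAt.continuousWithinAt
    · intro x hx
      rw [interior_Icc] at hx
      exact (hdiff x hx.1.le).differentiableWithinAt
    · intro x hx
      rw [interior_Icc] at hx
      have hx0 : 0 < x := hx.1
      have hx1 : 0 < 1 + h * x := by nlinarith
      have hx2 : 0 < 1 + g * x := by nlinarith
      rw [hderiv x hx1 hx2]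
      have hdx : 0 ≤ pstar - x := by linarith [hx.2]
      have hfle : (1 + h * x) * (1 + g * x) ≤ (1 + h * pstar) * (1 + g * pstar) := by
        nlinarith [mul_nonneg (mul_pos hh hg).le (mul_nonneg hdx (by linarith : (0:ℝ) ≤ pstar + x)),
          mul_nonneg (by linarith : (0:ℝ) ≤ h + g) hdx]
      have hle : α * T ≤ lam * T * B * ((h - g) / ((1 + h * x) * (1 + g * x)) / L) := by
        rw [div_div, ← mul_div_assoc, le_div_iff₀ (by positivity : (0:ℝ) < ((1 + h * x) * (1 + g * x)) * L)]
        nlinarith [hkey, mul_nonneg (mul_nonneg hT.le (mul_pos hL hα).le) (sub_nonneg.mpr hfle)]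
      linarith
  have hmono : MonotoneOn ψ (Set.Ici pstar) := by
    apply monotoneOn_of_deriv_nonneg (convex_Ici pstar)
    · exact fun x hx => (hdiff x (le_trans hp0.le hx)).continuousAt.continuousWithinAt
    · intro x hx
      rw [interior_Ici] at hx
      exact (hdiff x (le_trans hp0.le hx.le)).differentiableWithinAt
    · intro x hx
      rw [interior_Ici] at hx
      have hx0 : 0 < x := lt_trans hp0 hx
      have hx1 : 0 < 1 + h * x := by nlinarith
      have hx2 : 0 < 1 + g * x := by nlinarith
      rw [hderiv x hx1 hx2]
      have hdx : 0 ≤ x - pstar := by linarith [(Set.mem_Ioi.mp hx).le]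
      have hfge : (1 + h * pstar) * (1 + g * pstar) ≤ (1 + h * x) * (1 + g * x) := by
        nlinarith [mul_nonneg (mul_pos hh hg).le (mul_nonneg hdx (by linarith : (0:ℝ) ≤ x + pstar)),
          mul_nonneg (by linarith : (0:ℝ) ≤ h + g) hdx]
      have hle : lam * T * B * ((h - g) / ((1 + h * x) * (1 + g * x)) / L) ≤ α * T := by
        rw [div_div, ← mul_div_assoc, div_le_iff₀ (by positivity : (0:ℝ) < ((1 + h * x) * (1 + g * x)) * L)]
        nlinarith [hkey, mul_nonneg (mul_nonneg hT.le (mul_pos hL hα).le) (sub_nonneg.mpr hfge)]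
      linarith
  rw [isMinOn_iff]
  intro x hx
  rcases le_total x pstar with hxle | hxge
  · exact hanti ⟨hx, hxle⟩ ⟨hp0.le, le_refl pstar⟩ hxle
  · exact hmono (le_refl pstar) hxge hxge
end
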